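/- Let S be a complete RN module over ℝ with base (Ω, F, P) and let D ∈ F̃ with D ⊂ H(S) and P(D) > 0 be such that Rank_{D'}(S) < 2 for every D' ∈ F̃ with D' ⊂ D and P(D') > 0. Then δ_D(ε) = I_D for every ε ∈ L⁰(F,ℝ) with ε ≥ 0 and 0 < ε ≤ 2 on D. (This is the statement that δ_{H(S)\G(S)}(ε) = I_{H(S)\G(S)} whenever P(H(S)\G(S)) > 0.) -/

import Mathlib

open MeasureTheory Filter Set

noncomputable section

namespace RNM

variable {Ω : Type*} [MeasurableSpace Ω]

/-- `L⁰(F, ℝ)`: equivalence classes of real random variables mod a.e. equality. -/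
abbrev L0 (μ : Measure Ω) : Type _ := Ω →ₘ[μ] ℝ

open Classical in
/-- The equivalence class of the indicator function of a (measurable) set. -/
noncomputable def ind (μ : Measure Ω) (A : Set Ω) : L0 μ :=
  if h : MeasurableSet A then
    AEEqFun.mk (A.indicator fun _ => (1 : ℝ)) (aestronglyMeasurable_const.indicator h)
  else 0

/-- The constant function, as an element of `L⁰`. -/
noncomputable def cst (μ : Measure Ω) (r : ℝ) : L0 μ := AEEqFun.const Ω r

/-- `A ⊂ B` modulo null sets. -/
def aeSub (μ : Measure Ω) (A B : Set Ω) : Prop := μ (A \ B) = 0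

/-- `A = B` modulo null sets. -/
def aeEqS (μ : Measure Ω) (A B : Set Ω) : Prop := μ ((A \ B) ∪ (B \ A)) = 0

variable {μ : Measure Ω} {S : Type*} [AddCommGroup S]

/-- The axioms of a random normed module over ℝ with base `(Ω, F, μ)`: `S` is a left module
over the algebra `L⁰(F,ℝ)` (with module multiplication `sm`) and `nrm` is an `L⁰`-norm. -/
structure IsRNModule (μ : Measure Ω) (sm : L0 μ → S → S) (nrm : S → L0 μ) : Prop where
  smul_add : ∀ ξ x y, sm ξ (x + y) = sm ξ x + sm ξ y
  add_smul : ∀ ξ η x, sm (ξ + η) x = sm ξ x + sm η x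
  mul_smul : ∀ ξ η x, sm (ξ * η) x = sm ξ (sm η x)
  one_smul : ∀ x, sm 1 x = x
  nrm_nonneg : ∀ x, 0 ≤ nrm x
  nrm_smul : ∀ ξ x, nrm (sm ξ x) = |ξ| * nrm x
  nrm_add : ∀ x y, nrm (x + y) ≤ nrm x + nrm y
  nrm_eq_zero : ∀ x, nrm x = 0 → x = 0

/-- `x` and `y` are `L⁰`-independent on `F`. -/
def Indep (sm : L0 μ → S → S) (x y : S) (F : Set Ω) : Prop :=
  ∀ ξ η : L0 μ, sm (ξ * ind μ F) x + sm (η * ind μ F) y = 0 →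
    ξ * ind μ F = 0 ∧ η * ind μ F = 0

/-- `Rank_D(S) ≥ 2`. -/
def RankGe2 (sm : L0 μ → S → S) (D : Set Ω) : Prop := ∃ x y : S, Indep sm x y D

/-- `A_x = [‖x‖ > 0]`. -/
def Aset (nrm : S → L0 μ) (x : S) : Set Ω := {ω | 0 < (nrm x) ω}

/-- `A_{xy} = A_x ∩ A_y`. -/
def Axy (nrm : S → L0 μ) (x y : S) : Set Ω := Aset nrm x ∩ Aset nrm y

/-- `B_{xy} = A_{xy} ∩ A_{x-y}`. -/
def Bxy (nrm : S → L0 μ) (x y : S) : Set Ω := Axy nrm x y ∩ Aset nrm (x - y)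

/-- `H` is (a representative of) the support `H(S) = [⋁{‖x‖ : x ∈ S} > 0]`. -/
def IsSupport (nrm : S → L0 μ) (H : Set Ω) : Prop :=
  MeasurableSet H ∧ (∀ x : S, aeSub μ (Aset nrm x) H) ∧
    ∀ B : Set Ω, MeasurableSet B → aeSub μ B H → 0 < μ B →
      ∃ x : S, 0 < μ (B ∩ Aset nrm x)

/-- A sequence in `S` is Cauchy for the topology of convergence in probability. -/
def CauchyInProb (μ : Measure Ω) (nrm : S → L0 μ) (u : ℕ → S) : Prop :=
  ∀ ε : ℝ, 0 < ε →
    Tendsto (fun p : ℕ × ℕ => μ {ω | ε ≤ |(nrm (u p.1 - u p.2)) ω|}) atTop (nhds 0)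

/-- `u n → x` in probability (i.e. `‖u n - x‖ → 0` in probability). -/
def TendstoInProb (μ : Measure Ω) (nrm : S → L0 μ) (u : ℕ → S) (x : S) : Prop :=
  ∀ ε : ℝ, 0 < ε →
    Tendsto (fun n => μ {ω | ε ≤ |(nrm (u n - x)) ω|}) atTop (nhds 0)

/-- Completeness of a random normed module. -/
def CompleteRN (μ : Measure Ω) (nrm : S → L0 μ) : Prop :=
  ∀ u : ℕ → S, CauchyInProb μ nrm u → ∃ x : S, TendstoInProb μ nrm u x

/-- The random unit sphere `S(1)`. -/
def sphere (nrm : S → L0 μ) : Set S :=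
  {x | ∃ A : Set Ω, MeasurableSet A ∧ 0 < μ A ∧ nrm x = ind μ A}

/-- The random closed unit ball `U(1)`. -/
def ball (nrm : S → L0 μ) : Set S := {x | nrm x ≤ 1}

/-- `ε` is an admissible random convexity parameter on `D`: `ε ≥ 0` and `0 < ε ≤ 2` on `D`. -/
def Admissible (μ : Measure Ω) (D : Set Ω) (ε : L0 μ) : Prop :=
  0 ≤ ε ∧ ∀ᵐ ω ∂μ, ω ∈ D → 0 < ε ω ∧ ε ω ≤ 2

/-- midpoint `(x+y)/2`. -/
def mid (μ : Measure Ω) (sm : L0 μ → S → S) (x y : S) : S := sm (cst μ (1/2)) (x + y)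

/-- The set whose infimum (in the a.s. order of `L⁰`) is the modulus of random
convexity `δ_D(ε)`. -/
def modSet (μ : Measure Ω) (sm : L0 μ → S → S) (nrm : S → L0 μ) (D : Set Ω) (ε : L0 μ) :
    Set (L0 μ) :=
  {z | ∃ x ∈ sphere nrm, ∃ y ∈ sphere nrm, aeSub μ D (Bxy nrm x y) ∧
    ε * ind μ D ≤ ind μ D * nrm (x - y) ∧
    z = ind μ D - ind μ D * nrm (mid μ sm x y)}

/-- `S` is random uniformly convex: `δ_{H(S)}(ε) > 0` on `H(S)` for every admissible `ε`. -/
def RandomUniformlyConvex (μ : Measure Ω) (sm : L0 μ → S → S) (nrm : S → L0 μ)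
    (H : Set Ω) : Prop :=
  ∀ ε : L0 μ, Admissible μ H ε → ∀ d : L0 μ, IsGLB (modSet μ sm nrm H ε) d →
    ∀ᵐ ω ∂μ, ω ∈ H → 0 < d ω

/-- `G` is (a representative of) `G(S)`. -/
def IsGSet (μ : Measure Ω) (sm : L0 μ → S → S) (H G : Set Ω) : Prop :=
  MeasurableSet G ∧ aeSub μ G H ∧ 0 < μ G ∧ RankGe2 sm G ∧
    ∀ D : Set Ω, MeasurableSet D → aeSub μ D (H \ G) → 0 < μ D → ¬ RankGe2 sm D


section Aux

variable {sm : L0 μ → S → S} {nrm : S → L0 μ}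

lemma IsRNModule.sm_zero_left (h : IsRNModule μ sm nrm) (x : S) : sm 0 x = 0 := by
  have h2 : sm 0 x + sm 0 x = sm 0 x := by
    rw [← h.add_smul, add_zero]
  have h3 : sm 0 x + sm 0 x = 0 + sm 0 x := by rw [h2, zero_add]
  exact add_right_cancel h3

lemma IsRNModule.sm_sub_left (h : IsRNModule μ sm nrm) (a b : L0 μ) (x : S) :
    sm (a - b) x = sm a x - sm b x := by
  have h2 := h.add_smul (a - b) b x
  rw [sub_add_cancel] at h2
  rw [eq_sub_iff_add_eq, ← h2]

lemma IsRNModule.sm_sub_right (h : IsRNModule μ sm nrm) (a : L0 μ) (x y : S) :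
    sm a (x - y) = sm a x - sm a y := by
  have h2 := h.smul_add a (x - y) y
  rw [sub_add_cancel] at h2
  rw [eq_sub_iff_add_eq, ← h2]

lemma abs_neg_one_L0 : |(-1 : L0 μ)| = 1 := by
  refine AEEqFun.ext ?_
  filter_upwards [AEEqFun.coeFn_abs (-1 : L0 μ), AEEqFun.coeFn_neg (1 : L0 μ),
    AEEqFun.coeFn_one (β := ℝ) (μ := μ)] with ω h1 h2 h3
  rw [h1, h2]
  simp [h3]

lemma IsRNModule.nrm_neg (h : IsRNModule μ sm nrm) (x : S) : nrm (-x) = nrm x := by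
  have hneg : sm (-1) x = -x := by
    have h2 := h.add_smul (-1) 1 x
    rw [neg_add_cancel, h.sm_zero_left, h.one_smul] at h2
    exact (neg_eq_of_add_eq_zero_left h2.symm).symm
  rw [← hneg, h.nrm_smul, abs_neg_one_L0, one_mul]

/-- coercion of `ind`. -/
lemma ind_coeFn {A : Set Ω} (hA : MeasurableSet A) :
    ⇑(ind μ A) =ᵐ[μ] A.indicator (fun _ => (1 : ℝ)) := by
  rw [ind, dif_pos hA]
  exact AEEqFun.coeFn_mk _ _

end Aux

/-- **Corollary 2.1.** On a set `D` of positive probability on which the quasi-rank of `S`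
is strictly less than 2 (on every positive-probability subset), the modulus of random
convexity equals `I_D`:  `δ_D(ε) = I_D` for every admissible `ε`. -/
theorem modulus_eq_ind_of_rank_lt_two {Ω : Type*} [MeasurableSpace Ω] (μ : Measure Ω)
    [IsProbabilityMeasure μ] {S : Type*} [AddCommGroup S]
    (sm : L0 μ → S → S) (nrm : S → L0 μ) (hRN : IsRNModule μ sm nrm)
    (hcomp : CompleteRN μ nrm) (H : Set Ω) (hH : IsSupport nrm H)
    (D : Set Ω) (hDm : MeasurableSet D) (hDH : aeSub μ D H) (hDpos : 0 < μ D)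
    (hrk : ∀ D' : Set Ω, MeasurableSet D' → aeSub μ D' D → 0 < μ D' → ¬ RankGe2 sm D')
    (ε : L0 μ) (hε : Admissible μ D ε) :
    ∀ d : L0 μ, IsGLB (modSet μ sm nrm D ε) d → d = ind μ D := by
  classical
  have hkey : ∀ z ∈ modSet μ sm nrm D ε, z = ind μ D := by
    rintro z ⟨x, ⟨A, hAm, hApos, hnx⟩, y, ⟨B, hBm, hBpos, hny⟩, hsub, hle, rfl⟩
    set m : S := mid μ sm x y with hm
    set D' : Set Ω := D ∩ {ω | 0 < (nrm m) ω} with hD'def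
    have hD'm : MeasurableSet D' :=
      hDm.inter (measurableSet_lt measurable_const (nrm m).measurable)
    by_cases hD'0 : μ D' = 0
    · -- `‖mid‖ = 0` a.e. on `D`, hence `z = ind μ D`
      have h0 : ind μ D * nrm m = 0 := by
        refine AEEqFun.ext ?_
        have hnn : ∀ᵐ ω ∂μ, (0 : ℝ) ≤ (nrm m) ω := by
          filter_upwards [AEEqFun.coeFn_le.mpr (hRN.nrm_nonneg m),
            AEEqFun.coeFn_zero (β := ℝ) (μ := μ)] with ω h1 h2
          rw [h2] at h1; exact h1
        filter_upwards [AEEqFun.coeFn_mul (ind μ D) (nrm m), ind_coeFn hDm, hnn,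
          measure_eq_zero_iff_ae_notMem.mp hD'0, AEEqFun.coeFn_zero (β := ℝ) (μ := μ)]
          with ω h1 h2 h3 h4 h5
        rw [h1, h5, Pi.mul_apply, h2]
        by_cases hω : ω ∈ D
        · have hnl : ¬ (0 : ℝ) < (nrm m) ω := fun hc => h4 ⟨hω, hc⟩
          have : (nrm m) ω = 0 := le_antisymm (not_lt.mp hnl) h3
          simp [this]
        · simp [Set.indicator_of_notMem hω]
      rw [h0, sub_zero]
    · -- contradiction with the rank hypothesis
      exfalso
      have hD'sub : aeSub μ D' D := by
        have he : D' \ D = ∅ := by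
          rw [Set.diff_eq_empty]; exact Set.inter_subset_left
        rw [aeSub, he, measure_empty]
      refine hrk D' hD'm hD'sub ((zero_le).lt_of_ne (Ne.symm hD'0)) ⟨x, y, ?_⟩
      intro ξ η hrel
      set a : L0 μ := ξ * ind μ D' with ha
      set b : L0 μ := η * ind μ D' with hb
      have hax : sm a x = -(sm b y) := eq_neg_of_add_eq_zero_left hrel
      -- L⁰ identities
      have e1 : |a| * nrm x = |b| * nrm y := by
        have h2 : nrm (sm a x) = nrm (sm b y) := by rw [hax, hRN.nrm_neg]
        rwa [hRN.nrm_smul, hRN.nrm_smul] at h2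
      have e2 : |a| * nrm (x + y) = |a - b| * nrm y := by
        have h2 : sm a (x + y) = sm (a - b) y := by
          rw [hRN.smul_add, hax, hRN.sm_sub_left]; abel
        have h3 := congrArg nrm h2
        rwa [hRN.nrm_smul, hRN.nrm_smul] at h3
      have e3 : |a| * nrm (x - y) = |a + b| * nrm y := by
        have h2 : sm a (x - y) = -(sm (a + b) y) := by
          rw [hRN.sm_sub_right, hax, hRN.add_smul]; abel
        have h3 := congrArg nrm h2
        rwa [hRN.nrm_smul, hRN.nrm_neg, hRN.nrm_smul] at h3
      have e4 : nrm m = |cst μ (1/2)| * nrm (x + y) := by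
        rw [hm]; exact hRN.nrm_smul _ _
      -- pointwise versions
      have p1 : ∀ᵐ ω ∂μ, |a ω| * (nrm x) ω = |b ω| * (nrm y) ω := by
        filter_upwards [AEEqFun.coeFn_mul |a| (nrm x), AEEqFun.coeFn_mul |b| (nrm y),
          AEEqFun.coeFn_abs a, AEEqFun.coeFn_abs b] with ω h1 h2 h3 h4
        have := congrArg (fun f : L0 μ => f ω) e1
        simpa [h1, h2, h3, h4] using this
      have p2 : ∀ᵐ ω ∂μ, |a ω| * (nrm (x + y)) ω = |a ω - b ω| * (nrm y) ω := by
        filter_upwards [AEEqFun.coeFn_mul |a| (nrm (x + y)),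
          AEEqFun.coeFn_mul |a - b| (nrm y), AEEqFun.coeFn_abs a,
          AEEqFun.coeFn_abs (a - b), AEEqFun.coeFn_sub a b] with ω h1 h2 h3 h4 h5
        have := congrArg (fun f : L0 μ => f ω) e2
        simp only [h1, h2, Pi.mul_apply, h3, h4] at this
        rw [this, h5]; simp
      have p3 : ∀ᵐ ω ∂μ, |a ω| * (nrm (x - y)) ω = |a ω + b ω| * (nrm y) ω := by
        filter_upwards [AEEqFun.coeFn_mul |a| (nrm (x - y)),
          AEEqFun.coeFn_mul |a + b| (nrm y), AEEqFun.coeFn_abs a,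
          AEEqFun.coeFn_abs (a + b), AEEqFun.coeFn_add a b] with ω h1 h2 h3 h4 h5
        have := congrArg (fun f : L0 μ => f ω) e3
        simp only [h1, h2, Pi.mul_apply, h3, h4] at this
        rw [this, h5]; simp
      have p4 : ∀ᵐ ω ∂μ, (nrm m) ω = |1/2| * (nrm (x + y)) ω := by
        filter_upwards [AEEqFun.coeFn_mul |cst μ (1/2)| (nrm (x + y)),
          AEEqFun.coeFn_abs (cst μ (1/2)),
          AEEqFun.coeFn_const (α := Ω) (μ := μ) (1/2 : ℝ)] with ω h1 h2 h3
        have := congrArg (fun f : L0 μ => f ω) e4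
        simp only [h1, Pi.mul_apply, h2] at this
        have h3' : (cst μ (1/2 : ℝ)) ω = (1/2 : ℝ) := h3
        rw [this, h3']
      have hBsub : ∀ᵐ ω ∂μ, ω ∈ D → ω ∈ Bxy nrm x y := by
        filter_upwards [measure_eq_zero_iff_ae_notMem.mp hsub] with ω h1 h2
        by_contra hc; exact h1 ⟨h2, hc⟩
      have hx1 : ∀ᵐ ω ∂μ, 0 < (nrm x) ω → (nrm x) ω = 1 := by
        have hcx : ⇑(nrm x) =ᵐ[μ] A.indicator (fun _ => (1 : ℝ)) := hnx ▸ ind_coeFn hAm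
        filter_upwards [hcx] with ω h1 h2
        rw [h1] at h2 ⊢
        by_cases hω : ω ∈ A
        · simp [hω]
        · simp [Set.indicator_of_notMem hω] at h2
      have hy1 : ∀ᵐ ω ∂μ, 0 < (nrm y) ω → (nrm y) ω = 1 := by
        have hcy : ⇑(nrm y) =ᵐ[μ] B.indicator (fun _ => (1 : ℝ)) := hny ▸ ind_coeFn hBm
        filter_upwards [hcy] with ω h1 h2
        rw [h1] at h2 ⊢
        by_cases hω : ω ∈ B
        · simp [hω]
        · simp [Set.indicator_of_notMem hω] at h2
      have hca : ∀ᵐ ω ∂μ, a ω = ξ ω * D'.indicator (fun _ => (1 : ℝ)) ω := by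
        filter_upwards [AEEqFun.coeFn_mul ξ (ind μ D'), ind_coeFn hD'm] with ω h1 h2
        rw [ha, h1, Pi.mul_apply, h2]
      have hcb : ∀ᵐ ω ∂μ, b ω = η ω * D'.indicator (fun _ => (1 : ℝ)) ω := by
        filter_upwards [AEEqFun.coeFn_mul η (ind μ D'), ind_coeFn hD'm] with ω h1 h2
        rw [hb, h1, Pi.mul_apply, h2]
      -- the main pointwise argument
      have hmain : ∀ᵐ ω ∂μ, a ω = 0 ∧ b ω = 0 := by
        filter_upwards [p1, p2, p3, p4, hBsub, hx1, hy1, hca, hcb]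
          with ω q1 q2 q3 q4 qB qx qy qa qb
        by_cases hω : ω ∈ D'
        · obtain ⟨hωD, hωm⟩ := hω
          have hωm' : 0 < (nrm m) ω := hωm
          obtain ⟨⟨hx0, hy0⟩, hxy0⟩ := qB hωD
          have hnx1 : (nrm x) ω = 1 := qx hx0
          have hny1 : (nrm y) ω = 1 := qy hy0
          rw [hnx1, hny1, mul_one, mul_one] at q1
          rw [hny1, mul_one] at q2 q3
          have hs : 0 < (nrm (x + y)) ω := by
            by_contra hc
            rw [q4, abs_of_pos (by norm_num : (0:ℝ) < 1/2)] at hωm'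
            have := not_lt.mp hc
            linarith
          have haz : a ω = 0 := by
            rcases abs_eq_abs.mp q1 with hab | hab
            · have : |a ω - b ω| = 0 := by rw [hab]; simp
              rw [this] at q2
              have := mul_eq_zero.mp q2
              rcases this with h | h
              · exact abs_eq_zero.mp h
              · exact absurd h (ne_of_gt hs)
            · have : |a ω + b ω| = 0 := by rw [hab]; simp
              rw [this] at q3
              have := mul_eq_zero.mp q3
              rcases this with h | h
              · exact abs_eq_zero.mp h
              · exact absurd h (ne_of_gt hxy0)
          have hbz : b ω = 0 := by
            have : |b ω| = 0 := by rw [← q1, haz]; simp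
            exact abs_eq_zero.mp this
          exact ⟨haz, hbz⟩
        · constructor
          · rw [qa, Set.indicator_of_notMem hω, mul_zero]
          · rw [qb, Set.indicator_of_notMem hω, mul_zero]
      constructor
      · refine AEEqFun.ext ?_
        filter_upwards [hmain, AEEqFun.coeFn_zero (β := ℝ) (μ := μ)] with ω h1 h2
        simp [h1.1, h2]
      · refine AEEqFun.ext ?_
        filter_upwards [hmain, AEEqFun.coeFn_zero (β := ℝ) (μ := μ)] with ω h1 h2
        simp [h1.2, h2]
  -- conclude from the GLB hypothesis
  intro d hd
  rcases (modSet μ sm nrm D ε).eq_empty_or_nonempty with he | ⟨z0, hz0⟩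
  · exfalso
    have hall : ∀ z : L0 μ, z ≤ d := by
      intro z
      exact hd.2 (by rw [he, lowerBounds_empty]; trivial)
    have h1 : d + 1 ≤ d := hall (d + 1)
    have h2 := AEEqFun.coeFn_le.mpr h1
    have h3 : ∀ᵐ ω ∂μ, False := by
      filter_upwards [h2, AEEqFun.coeFn_add d 1, AEEqFun.coeFn_one (β := ℝ) (μ := μ)]
        with ω q1 q2 q3
      rw [q2, Pi.add_apply, q3] at q1
      simp at q1
      linarith [q1]
    have h4 := ae_iff.mp h3
    simp at h4
  · have hmod : modSet μ sm nrm D ε = {ind μ D} := by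
      apply Set.eq_singleton_iff_unique_mem.mpr
      refine ⟨?_, fun z hz => hkey z hz⟩
      have := hkey z0 hz0
      rwa [this] at hz0
    rw [hmod] at hd
    exact hd.unique isGLB_singleton

end RNM
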